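/- Let n ≥ 1. There exist constants C, c > 0 such that for all x, y ∈ ℝⁿ and all t > 0, W_t^ℋ(x,y) ≤ C e^{−c|x−y|²/t} t^{−(n+1)/2} / (1 + |y|). -/

import Mathlib

open MeasureTheory Real Set

/-- The Hermite (Mehler) heat kernel on `ℝⁿ`. -/
noncomputable def hermiteHeat (n : ℕ) (t : ℝ) (x y : EuclideanSpace ℝ (Fin n)) : ℝ :=
  Real.pi ^ (-(n : ℝ) / 2) * (Real.exp (-(2 * t)) / (1 - Real.exp (-(4 * t)))) ^ ((n : ℝ) / 2) *
    Real.exp (-(1 / 4) * (‖x - y‖ ^ 2 * (1 + Real.exp (-(2 * t))) / (1 - Real.exp (-(2 * t)))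
      + ‖x + y‖ ^ 2 * (1 - Real.exp (-(2 * t))) / (1 + Real.exp (-(2 * t)))))

lemma mul_exp_le_aux (s r : ℝ) (hr : 0 < r) :
    s * Real.exp (-(s ^ 2 / r ^ 2)) ≤ r := by
  have h1 : s ^ 2 / r ^ 2 + 1 ≤ Real.exp (s ^ 2 / r ^ 2) := Real.add_one_le_exp _
  have hd : s ^ 2 / r * r = s ^ 2 := div_mul_cancel₀ _ (ne_of_gt hr)
  have h3 : s ≤ s ^ 2 / r + r := by nlinarith [sq_nonneg (s - r)]
  have h2 : r * (s ^ 2 / r ^ 2 + 1) = s ^ 2 / r + r := by field_simp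
  have key : s ≤ r * Real.exp (s ^ 2 / r ^ 2) := by
    calc s ≤ s ^ 2 / r + r := h3
      _ = r * (s ^ 2 / r ^ 2 + 1) := h2.symm
      _ ≤ r * Real.exp (s ^ 2 / r ^ 2) := mul_le_mul_of_nonneg_left h1 hr.le
  calc s * Real.exp (-(s ^ 2 / r ^ 2)) = s / Real.exp (s ^ 2 / r ^ 2) := by
        rw [Real.exp_neg]; ring
    _ ≤ r := by
        rw [div_le_iff₀ (Real.exp_pos _)]
        linarith [key, mul_comm r (Real.exp (s ^ 2 / r ^ 2))]

set_option maxHeartbeats 1000000 in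
/-- there exist `C, c > 0` with
`W_t^ℋ(x,y) ≤ C e^{−c|x−y|²/t} t^{−(n+1)/2} / (1 + |y|)` for all `x, y ∈ ℝⁿ`, `t > 0`. -/
theorem statement10 (n : ℕ) (hn : 1 ≤ n) :
    ∃ C > (0 : ℝ), ∃ c > (0 : ℝ), ∀ (x y : EuclideanSpace ℝ (Fin n)) (t : ℝ), 0 < t →
      hermiteHeat n t x y
        ≤ C * Real.exp (-(c * ‖x - y‖ ^ 2 / t)) * t ^ (-((n : ℝ) + 1) / 2) / (1 + ‖y‖) := by
  have hC0 : (0:ℝ) < 6 * 2 ^ n * 3 ^ (n + 2) := by positivity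
  refine ⟨6 * 2 ^ n * 3 ^ (n + 2), hC0, 1/16, by norm_num, ?_⟩
  intro x y t ht
  simp only [hermiteHeat]
  have hn1 : (1:ℝ) ≤ (n:ℝ) := by exact_mod_cast hn
  have hu0 : (0:ℝ) ≤ ‖x - y‖ := norm_nonneg _
  have hv0 : (0:ℝ) ≤ ‖x + y‖ := norm_nonneg _
  set u : ℝ := ‖x - y‖ with hu_def
  set v : ℝ := ‖x + y‖ with hv_def
  set a : ℝ := Real.exp (-(2 * t)) with ha_def
  have ha0 : 0 < a := Real.exp_pos _
  have ha1 : a < 1 := by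
    rw [ha_def]
    exact Real.exp_lt_one_iff.mpr (by linarith)
  have h1a : 0 < 1 - a := by linarith
  have h1a' : 0 < 1 + a := by linarith
  have haexp : a * Real.exp (2 * t) = 1 := by
    rw [ha_def, ← Real.exp_add]; norm_num
  have hle2t : 1 - a ≤ 2 * t := by
    have h := Real.add_one_le_exp (-(2 * t))
    rw [← ha_def] at h; linarith
  set m : ℝ := min t (1/2 : ℝ) with hm_def
  have hm0 : 0 < m := lt_min ht (by norm_num)
  have hmt : m ≤ t := min_le_left _ _
  have hexpone : (2:ℝ) ≤ Real.exp 1 := by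
    have := Real.exp_one_gt_d9; linarith
  have hm_le : m ≤ 1 - a := by
    rcases le_or_gt t (1/2) with hcase | hcase
    · rw [hm_def, min_eq_left hcase]
      have h2 : 1 + 2 * t ≤ Real.exp (2 * t) := by
        have := Real.add_one_le_exp (2 * t); linarith
      nlinarith
    · rw [hm_def, min_eq_right hcase.le]
      have h2 : a ≤ Real.exp (-1) := by
        rw [ha_def]; exact Real.exp_le_exp.mpr (by linarith)
      have h3 : Real.exp (-1) ≤ 1/2 := by
        rw [Real.exp_neg]
        rw [inv_le_comm₀ (Real.exp_pos 1) (by norm_num)]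
        norm_num
        linarith
      linarith
  -- exponent bounds
  have hA : u ^ 2 / (2 * t) ≤ u ^ 2 * (1 + a) / (1 - a) := by
    rw [div_le_div_iff₀ (by linarith) h1a]
    nlinarith [sq_nonneg u, mul_nonneg (sq_nonneg u) ha0.le,
      mul_nonneg (mul_nonneg (sq_nonneg u) ha0.le) ht.le,
      mul_nonneg (sq_nonneg u) (by linarith : (0:ℝ) ≤ 2 * t - (1 - a))]
  have hB : v ^ 2 * m / 2 ≤ v ^ 2 * (1 - a) / (1 + a) := by
    rw [div_le_div_iff₀ (by norm_num) h1a']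
    have h := mul_le_mul_of_nonneg_left hm_le (sq_nonneg v)
    nlinarith [mul_nonneg (mul_nonneg (sq_nonneg v) hm0.le) ha0.le,
      mul_nonneg (sq_nonneg v) h1a.le]
  set e1 : ℝ := Real.exp (-(u ^ 2 / (16 * t))) with he1_def
  set e2 : ℝ := Real.exp (-(v ^ 2 * m / 8)) with he2_def
  have he10 : 0 < e1 := Real.exp_pos _
  have he20 : 0 < e2 := Real.exp_pos _
  have he11 : e1 ≤ 1 := by
    rw [he1_def]; exact Real.exp_le_one_iff.mpr (neg_nonpos.mpr (by positivity))
  have he21 : e2 ≤ 1 := by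
    rw [he2_def]; exact Real.exp_le_one_iff.mpr (neg_nonpos.mpr (by positivity))
  -- bound on the exponential factor
  have hE : Real.exp (-(1/4 : ℝ) * (u ^ 2 * (1 + a) / (1 - a) + v ^ 2 * (1 - a) / (1 + a)))
      ≤ e1 * (e1 * e2) := by
    rw [he1_def, he2_def, ← Real.exp_add, ← Real.exp_add]
    apply Real.exp_le_exp.mpr
    have hid : -(u ^ 2 / (16 * t)) + (-(u ^ 2 / (16 * t)) + -(v ^ 2 * m / 8))
        = -(1/4 : ℝ) * (u ^ 2 / (2 * t) + v ^ 2 * m / 2) := by ring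
    rw [hid]; linarith
  -- sqrt bounds
  have hsqt : 0 < Real.sqrt t := Real.sqrt_pos.mpr ht
  have hsqm : 0 < Real.sqrt m := Real.sqrt_pos.mpr hm0
  have hu_e : u * e1 ≤ 4 * Real.sqrt t := by
    have hr : 0 < Real.sqrt (16 * t) := Real.sqrt_pos.mpr (by linarith)
    have h := mul_exp_le_aux u (Real.sqrt (16 * t)) hr
    rw [Real.sq_sqrt (by linarith : (0:ℝ) ≤ 16 * t)] at h
    have h16 : Real.sqrt (16 * t) = 4 * Real.sqrt t := by
      rw [show (16:ℝ) * t = 4 ^ 2 * t by norm_num, Real.sqrt_mul (by positivity),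
        Real.sqrt_sq (by norm_num : (0:ℝ) ≤ 4)]
    rw [he1_def]; rw [h16] at h; exact h
  have hv_e : v * e2 ≤ 3 / Real.sqrt m := by
    have hr : 0 < Real.sqrt (8 / m) := Real.sqrt_pos.mpr (by positivity)
    have h := mul_exp_le_aux v (Real.sqrt (8 / m)) hr
    rw [Real.sq_sqrt (by positivity : (0:ℝ) ≤ 8 / m), div_div_eq_mul_div] at h
    have h8 : Real.sqrt (8 / m) ≤ 3 / Real.sqrt m := by
      rw [Real.sqrt_div (by norm_num : (0:ℝ) ≤ 8) m]
      have h9 : Real.sqrt 8 ≤ 3 := by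
        rw [show (3:ℝ) = Real.sqrt 9 by
          rw [show (9:ℝ) = 3 ^ 2 by norm_num, Real.sqrt_sq (by norm_num : (0:ℝ) ≤ 3)]]
        exact Real.sqrt_le_sqrt (by norm_num)
      gcongr
    rw [he2_def]
    exact h.trans h8
  -- bound on (1 + ‖y‖) · e1 · e2
  have hy : 1 + ‖y‖ ≤ 1 + u / 2 + v / 2 := by
    have h2y : (2:ℝ) * ‖y‖ ≤ v + u := by
      have hyy : (2:ℝ) • y = (x + y) - (x - y) := by module
      calc (2:ℝ) * ‖y‖ = ‖(2:ℝ) • y‖ := by rw [norm_smul]; simp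
        _ = ‖(x + y) - (x - y)‖ := by rw [hyy]
        _ ≤ v + u := norm_sub_le _ _
    linarith
  clear_value u v a m e1 e2
  have hS : (1 + ‖y‖) * (e1 * e2) ≤ 1 + 2 * Real.sqrt t + 2 / Real.sqrt m := by
    have hy0 : (0:ℝ) ≤ 1 + ‖y‖ := by positivity
    have p0 : e1 * e2 ≤ 1 := by
      calc e1 * e2 ≤ 1 * 1 := mul_le_mul he11 he21 he20.le zero_le_one
        _ = 1 := mul_one 1
    have p2 : u * e1 * e2 ≤ 4 * Real.sqrt t := by
      calc u * e1 * e2 ≤ (4 * Real.sqrt t) * 1 :=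
            mul_le_mul hu_e he21 he20.le (by positivity)
        _ = 4 * Real.sqrt t := mul_one _
    have p3 : v * e2 * e1 ≤ 3 / Real.sqrt m := by
      calc v * e2 * e1 ≤ (3 / Real.sqrt m) * 1 :=
            mul_le_mul hv_e he11 he10.le (by positivity)
        _ = 3 / Real.sqrt m := mul_one _
    have hstep : (1 + ‖y‖) * (e1 * e2) ≤ (1 + u / 2 + v / 2) * (e1 * e2) :=
      mul_le_mul_of_nonneg_right hy (by positivity)
    have hid : (1 + u / 2 + v / 2) * (e1 * e2)
        = e1 * e2 + (u * e1 * e2) / 2 + (v * e2 * e1) / 2 := by ring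
    have hlast : 3 / Real.sqrt m / 2 ≤ 2 / Real.sqrt m := by
      rw [div_le_div_iff₀ (by positivity) hsqm]
      have h33 : 3 / Real.sqrt m * Real.sqrt m = 3 := div_mul_cancel₀ 3 (ne_of_gt hsqm)
      linarith [hsqm]
    calc (1 + ‖y‖) * (e1 * e2) ≤ e1 * e2 + (u * e1 * e2) / 2 + (v * e2 * e1) / 2 := by
          rw [← hid]; exact hstep
      _ ≤ 1 + (4 * Real.sqrt t) / 2 + (3 / Real.sqrt m) / 2 := by
          gcongr
      _ ≤ 1 + 2 * Real.sqrt t + 2 / Real.sqrt m := by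
          have := hlast; linarith
  -- positivity of pieces
  have hpi : Real.pi ^ (-(n : ℝ) / 2) ≤ 1 := by
    apply Real.rpow_le_one_of_one_le_of_nonpos (by linarith [Real.pi_gt_three])
    have : (0:ℝ) ≤ (n:ℝ) := Nat.cast_nonneg n
    linarith
  have hpi0 : 0 < Real.pi ^ (-(n : ℝ) / 2) := Real.rpow_pos_of_pos Real.pi_pos _
  have ha4 : Real.exp (-(4 * t)) = a ^ 2 := by
    rw [ha_def, sq, ← Real.exp_add]; congr 1; ring
  have ha40 : 0 < 1 - Real.exp (-(4 * t)) := by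
    rw [ha4, show (1:ℝ) - a ^ 2 = (1 - a) * (1 + a) by ring]
    exact mul_pos h1a h1a'
  set q : ℝ := a / (1 - Real.exp (-(4 * t))) with hq_def
  have hq0 : 0 < q := div_pos ha0 ha40
  clear_value q
  -- the key scalar inequality
  have hq0' : (0:ℝ) ≤ q ^ ((n:ℝ)/2) := (Real.rpow_pos_of_pos hq0 _).le
  have hC5 : (6:ℝ) ≤ 6 * 2 ^ n * 3 ^ (n + 2) := by
    have h2 : (1:ℝ) ≤ 2 ^ n := one_le_pow₀ (by norm_num)
    have h3 : (1:ℝ) ≤ 3 ^ (n + 2) := one_le_pow₀ (by norm_num)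
    calc (6:ℝ) = 6 * 1 * 1 := by norm_num
      _ ≤ 6 * 2 ^ n * 3 ^ (n + 2) :=
          mul_le_mul (mul_le_mul_of_nonneg_left h2 (by norm_num)) h3 zero_le_one (by positivity)
  have hkey : q ^ ((n:ℝ)/2) * (1 + 2 * Real.sqrt t + 2 / Real.sqrt m)
      ≤ 6 * 2 ^ n * 3 ^ (n + 2) * t ^ (-((n:ℝ) + 1) / 2) := by
    have hexpand : t ^ (-((n:ℝ) + 1) / 2) = t ^ (-((n:ℝ)/2)) * t ^ (-(1/2 : ℝ)) := by
      rw [← Real.rpow_add ht]; congr 1; ring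
    rcases le_or_gt t (1/2) with hcase | hcase
    · -- small time
      have hmeq : m = t := by rw [hm_def, min_eq_left hcase]
      have hsq1 : Real.sqrt t ≤ 1 := by
        rw [show (1:ℝ) = Real.sqrt 1 from (Real.sqrt_one).symm]
        exact Real.sqrt_le_sqrt (by linarith)
      have hS5 : 1 + 2 * Real.sqrt t + 2 / Real.sqrt m ≤ 5 / Real.sqrt t := by
        rw [hmeq, le_div_iff₀ hsqt]
        have hts : Real.sqrt t * Real.sqrt t = t := Real.mul_self_sqrt ht.le
        have hds : 2 / Real.sqrt t * Real.sqrt t = 2 := div_mul_cancel₀ 2 (ne_of_gt hsqt)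
        have hexpd : (1 + 2 * Real.sqrt t + 2 / Real.sqrt t) * Real.sqrt t
            = Real.sqrt t + 2 * t + 2 := by
          rw [add_mul, add_mul, one_mul, hds, mul_assoc, hts]
        rw [hexpd]
        linarith [hsq1, hcase]
      have hsinh : 4 * t < Real.exp (2*t) - a := by
        have h := (Real.self_lt_sinh_iff).mpr (by linarith : (0:ℝ) < 2*t)
        rw [Real.sinh_eq] at h
        rw [ha_def]; linarith
      have hat : a * t ≤ 1 - a ^ 2 := by
        have h5 := mul_lt_mul_of_pos_left hsinh ha0
        have h6 : a * (Real.exp (2*t) - a) = 1 - a ^ 2 := by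
          rw [mul_sub, haexp]; ring
        have h7 : a * t ≤ a * (4 * t) :=
          mul_le_mul_of_nonneg_left (by linarith) ha0.le
        linarith
      have h1a2 : (0:ℝ) < 1 - a ^ 2 := by
        rw [show (1:ℝ) - a ^ 2 = (1 - a) * (1 + a) by ring]
        exact mul_pos h1a h1a'
      have hq_le : q ≤ t⁻¹ := by
        rw [hq_def, ha4, div_le_iff₀ h1a2]
        have h := mul_le_mul_of_nonneg_left hat (le_of_lt (inv_pos.mpr ht))
        have ht' : t⁻¹ * (a * t) = a := by field_simp
        linarith
      have hqpow : q ^ ((n:ℝ)/2) ≤ t ^ (-((n:ℝ)/2)) := by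
        calc q ^ ((n:ℝ)/2) ≤ (t⁻¹) ^ ((n:ℝ)/2) :=
              Real.rpow_le_rpow hq0.le hq_le (by positivity)
          _ = t ^ (-((n:ℝ)/2)) := by
              rw [Real.inv_rpow ht.le, ← Real.rpow_neg ht.le]
      have h5d : (5:ℝ) / Real.sqrt t = 5 * t ^ (-(1/2:ℝ)) := by
        rw [Real.sqrt_eq_rpow, Real.rpow_neg ht.le, div_eq_mul_inv]
      calc q ^ ((n:ℝ)/2) * (1 + 2 * Real.sqrt t + 2 / Real.sqrt m)
          ≤ t ^ (-((n:ℝ)/2)) * (5 / Real.sqrt t) := by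
            apply mul_le_mul hqpow hS5 (by positivity) (Real.rpow_pos_of_pos ht _).le
        _ = 5 * (t ^ (-((n:ℝ)/2)) * t ^ (-(1/2:ℝ))) := by rw [h5d]; ring
        _ = 5 * t ^ (-((n:ℝ) + 1) / 2) := by rw [hexpand]
        _ ≤ 6 * 2 ^ n * 3 ^ (n + 2) * t ^ (-((n:ℝ) + 1) / 2) :=
            mul_le_mul_of_nonneg_right (by linarith) (Real.rpow_pos_of_pos ht _).le
    · -- large time
      have hmeq : m = 1/2 := by rw [hm_def, min_eq_right hcase.le]
      have hsqhalf : (2:ℝ)/3 ≤ Real.sqrt m := by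
        rw [hmeq]
        exact (Real.le_sqrt (by norm_num) (by norm_num)).mpr (by norm_num)
      have h2m : 2 / Real.sqrt m ≤ 3 := by
        rw [div_le_iff₀ hsqm]; linarith
      have hsqt_le : Real.sqrt t ≤ 1 + t := by
        have hsq : (1+t)^2 = 1 + 2*t + t^2 := by ring
        have h := Real.sqrt_le_sqrt (by linarith [sq_nonneg t] : t ≤ (1+t)^2)
        rwa [Real.sqrt_sq (by linarith : (0:ℝ) ≤ 1+t)] at h
      have hS6 : 1 + 2 * Real.sqrt t + 2 / Real.sqrt m ≤ 6 * (1+t) := by linarith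
      have hhalf : Real.exp (-(4*t)) ≤ 1/2 := by
        have h1 : Real.exp (-(4*t)) ≤ Real.exp (-(2:ℝ)) := Real.exp_le_exp.mpr (by linarith)
        have h2 : (2:ℝ) ≤ Real.exp 2 := by have := Real.add_one_le_exp (2:ℝ); linarith
        have h3 : Real.exp (-(2:ℝ)) ≤ 1/2 := by
          rw [Real.exp_neg, inv_le_comm₀ (Real.exp_pos 2) (by norm_num)]
          linarith
        linarith
      have hq2 : q ≤ 2 * a := by
        rw [hq_def, div_le_iff₀ ha40]
        have h := mul_le_mul_of_nonneg_left
          (by linarith : (1:ℝ)/2 ≤ 1 - Real.exp (-(4*t))) (by linarith : (0:ℝ) ≤ 2*a)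
        linarith
      have hq2pow : q ^ ((n:ℝ)/2) ≤ 2 ^ n * Real.exp (-(t * (n:ℝ))) := by
        calc q ^ ((n:ℝ)/2) ≤ (2*a) ^ ((n:ℝ)/2) :=
              Real.rpow_le_rpow hq0.le hq2 (by positivity)
          _ = 2 ^ ((n:ℝ)/2) * a ^ ((n:ℝ)/2) := Real.mul_rpow (by norm_num) ha0.le
          _ ≤ 2 ^ n * Real.exp (-(t*(n:ℝ))) := by
              have h2' : (2:ℝ) ^ ((n:ℝ)/2) ≤ (2:ℝ) ^ (n:ℕ) := by
                rw [← Real.rpow_natCast 2 n]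
                exact Real.rpow_le_rpow_of_exponent_le (by norm_num) (by linarith)
              have ha' : a ^ ((n:ℝ)/2) = Real.exp (-(t*(n:ℝ))) := by
                rw [ha_def, ← Real.exp_mul]; congr 1; ring
              rw [ha']
              exact mul_le_mul_of_nonneg_right h2' (Real.exp_pos _).le
      have hbase : 1 + t ≤ 3 * Real.exp (t * (n:ℝ) / ((n:ℝ)+2)) := by
        have hge : t/3 ≤ t * (n:ℝ) / ((n:ℝ)+2) := by
          rw [div_le_div_iff₀ (by norm_num) (by positivity)]
          have h := mul_le_mul_of_nonneg_left hn1 ht.le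
          linarith
        have h := Real.add_one_le_exp (t * (n:ℝ) / ((n:ℝ)+2))
        linarith
      have hpoly : (1+t) ^ (n+2) ≤ 3 ^ (n+2) * Real.exp (t * (n:ℝ)) := by
        calc (1+t) ^ (n+2) ≤ (3 * Real.exp (t * (n:ℝ) / ((n:ℝ)+2))) ^ (n+2) :=
              pow_le_pow_left₀ (by linarith) hbase _
          _ = 3 ^ (n+2) * Real.exp (t * (n:ℝ) / ((n:ℝ)+2)) ^ (n+2) := mul_pow _ _ _
          _ = 3 ^ (n+2) * Real.exp (t * (n:ℝ)) := by
              rw [← Real.exp_nat_mul]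
              congr 1
              have : ((n:ℝ)+2) ≠ 0 := by positivity
              push_cast
              field_simp
      have htpow : t ^ (((n:ℝ)+1)/2) ≤ (1+t) ^ (n+1) := by
        have h1 : t ≤ (1+t)^2 := by
          have hsq : (1+t)^2 = 1 + 2*t + t^2 := by ring
          linarith [sq_nonneg t]
        calc t ^ (((n:ℝ)+1)/2) ≤ ((1+t)^2) ^ (((n:ℝ)+1)/2) :=
              Real.rpow_le_rpow ht.le h1 (by positivity)
          _ = (1+t) ^ (n+1) := by
              rw [← Real.rpow_natCast (1+t) 2, ← Real.rpow_mul (by linarith : (0:ℝ) ≤ 1+t)]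
              rw [show ((2:ℕ):ℝ) * (((n:ℝ)+1)/2) = ((n+1 : ℕ):ℝ) by push_cast; ring]
              exact Real.rpow_natCast _ _
      have hfinal : (1+t) * t ^ (((n:ℝ)+1)/2) ≤ 3 ^ (n+2) * Real.exp (t*(n:ℝ)) := by
        calc (1+t) * t ^ (((n:ℝ)+1)/2) ≤ (1+t) * (1+t)^(n+1) :=
              mul_le_mul_of_nonneg_left htpow (by linarith)
          _ = (1+t)^(n+2) := by ring
          _ ≤ 3 ^ (n+2) * Real.exp (t*(n:ℝ)) := hpoly
      have hrw : t ^ (-((n:ℝ)+1)/2) = (t ^ (((n:ℝ)+1)/2))⁻¹ := by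
        rw [show (-((n:ℝ)+1)/2) = -(((n:ℝ)+1)/2) by ring, Real.rpow_neg ht.le]
      have htp0 : 0 < t ^ (((n:ℝ)+1)/2) := Real.rpow_pos_of_pos ht _
      have hexpcancel : Real.exp (t*(n:ℝ)) * Real.exp (-(t*(n:ℝ))) = 1 := by
        rw [← Real.exp_add]; simp
      calc q ^ ((n:ℝ)/2) * (1 + 2 * Real.sqrt t + 2 / Real.sqrt m)
          ≤ (2 ^ n * Real.exp (-(t*(n:ℝ)))) * (6*(1+t)) :=
            mul_le_mul hq2pow hS6 (by positivity) (by positivity)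
        _ ≤ 6 * 2 ^ n * 3 ^ (n + 2) * t ^ (-((n:ℝ) + 1) / 2) := by
            rw [hrw, ← div_eq_mul_inv, le_div_iff₀ htp0]
            have h := mul_le_mul_of_nonneg_right hfinal (Real.exp_pos (-(t*(n:ℝ)))).le
            calc (2 ^ n * Real.exp (-(t*(n:ℝ)))) * (6*(1+t)) * t ^ (((n:ℝ)+1)/2)
                = 6 * 2 ^ n * ((1+t) * t ^ (((n:ℝ)+1)/2) * Real.exp (-(t*(n:ℝ)))) := by
                  ring
              _ ≤ 6 * 2 ^ n * (3 ^ (n+2) * Real.exp (t*(n:ℝ)) * Real.exp (-(t*(n:ℝ)))) := by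
                  apply mul_le_mul_of_nonneg_left h (by positivity)
              _ = 6 * 2 ^ n * 3 ^ (n + 2) := by
                  rw [mul_assoc ((3:ℝ) ^ (n+2)), hexpcancel, mul_one]
  -- conclusion
  rw [le_div_iff₀ (by positivity : (0:ℝ) < 1 + ‖y‖)]
  have hgexp : Real.exp (-(1/16 * u^2 / t)) = e1 := by
    rw [he1_def]; congr 1; ring
  rw [hgexp]
  calc Real.pi ^ (-(n:ℝ)/2) * q ^ ((n:ℝ)/2)
        * Real.exp (-(1/4) * (u ^ 2 * (1 + a) / (1 - a) + v ^ 2 * (1 - a) / (1 + a)))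
        * (1 + ‖y‖)
      ≤ Real.pi ^ (-(n:ℝ)/2) * q ^ ((n:ℝ)/2) * (e1 * (e1 * e2)) * (1 + ‖y‖) := by
        apply mul_le_mul_of_nonneg_right
          (mul_le_mul_of_nonneg_left hE (by positivity)) (by positivity)
    _ = (q ^ ((n:ℝ)/2) * ((1 + ‖y‖) * (e1 * e2))) * Real.pi ^ (-(n:ℝ)/2) * e1 := by ring
    _ ≤ (q ^ ((n:ℝ)/2) * (1 + 2 * Real.sqrt t + 2 / Real.sqrt m)) * 1 * e1 := by
        apply mul_le_mul_of_nonneg_right _ he10.le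
        exact mul_le_mul (mul_le_mul_of_nonneg_left hS hq0') hpi hpi0.le
          (mul_nonneg hq0' (by positivity))
    _ ≤ (6 * 2 ^ n * 3 ^ (n + 2) * t ^ (-((n:ℝ) + 1) / 2)) * 1 * e1 := by
        apply mul_le_mul_of_nonneg_right
          (mul_le_mul_of_nonneg_right hkey (by norm_num)) he10.le
    _ = 6 * 2 ^ n * 3 ^ (n + 2) * e1 * t ^ (-((n:ℝ) + 1) / 2) := by ring
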